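/- Assume unit costs. Let j ∈ {1,…,B}, let π be a permutation of Fin n, let 1 ≤ l ≤ n − 1 be a position with p(π(l)) < p(π(l+1)), and let π' be the permutation obtained from π by swapping the entries in positions l and l+1. Then C₁^j(π') ≤ C₁^j(π); in fact C₁^j(π) − C₁^j(π') equals (p(π(l+1)) − p(π(l))) times a nonnegative sum of probabilities, hence is nonnegative. -/

import Mathlib

open Finset

/-- Number of true bits of an assignment. -/
def N1 {n : ℕ} (a : Fin n → Bool) : ℕ :=
  (Finset.univ.filter (fun i => a i = true)).card

/-- Probability of an assignment. -/
noncomputable def pr {n : ℕ} (p : Fin n → ℝ) (a : Fin n → Bool) : ℝ :=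
  ∏ i, if a i then p i else 1 - p i

/-- Least `k` such that the first `k` entries of `l` contain at least `m`
indices selected by `sel`. -/
noncomputable def stopCount {n : ℕ} (sel : Fin n → Bool) (m : ℕ) (l : List (Fin n)) : ℕ :=
  sInf {k | m ≤ ((l.take k).filter sel).length}

/-- `C₁^j(σ)`: expected number of queries, over the block `{a | αj ≤ N₁(a) < βj}`,
until `αj` ones have been observed, querying in the order `σ(0), σ(1), …`. -/
noncomputable def C1 {n : ℕ} (p : Fin n → ℝ) (αj βj : ℕ) (σ : Equiv.Perm (Fin n)) : ℝ :=
  ∑ a ∈ Finset.univ.filter (fun a : Fin n → Bool => αj ≤ N1 a ∧ N1 a < βj),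
    (stopCount a αj (List.ofFn (fun t => σ t)) : ℝ) * pr p a

section aux

variable {n : ℕ}

lemma N1_comp (σ : Equiv.Perm (Fin n)) (a : Fin n → Bool) :
    N1 (fun i => a (σ i)) = N1 a := by
  unfold N1
  apply Finset.card_bij' (fun t _ => σ t) (fun t _ => σ.symm t) <;> simp

lemma length_filter_take_ofFn {α : Type*} (f : Fin n → α) (sel : α → Bool) (k : ℕ) :
    (((List.ofFn f).take k).filter sel).length
      = (Finset.univ.filter (fun t : Fin n => (t : ℕ) < k ∧ sel (f t) = true)).card := by
  induction k with
  | zero => simp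
  | succ k ih =>
    by_cases hk : k < n
    · rw [List.take_succ]
      have h1 : (List.ofFn f)[k]? = some (f ⟨k, hk⟩) := by
        simp [List.getElem?_ofFn, hk]
      rw [h1, List.filter_append, List.length_append, ih]
      have h2 : (Finset.univ.filter (fun t : Fin n => (t : ℕ) < k + 1 ∧ sel (f t) = true))
          = (Finset.univ.filter (fun t : Fin n => (t : ℕ) < k ∧ sel (f t) = true)) ∪
            (Finset.univ.filter (fun t : Fin n => t = ⟨k, hk⟩ ∧ sel (f t) = true)) := by
        rw [← Finset.filter_or]
        apply Finset.filter_congr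
        intro t _
        simp only [eq_iff_iff, Fin.ext_iff]
        constructor
        · rintro ⟨ha, hb⟩
          rcases Nat.lt_succ_iff_lt_or_eq.mp ha with h | h
          · exact Or.inl ⟨h, hb⟩
          · exact Or.inr ⟨h, hb⟩
        · rintro (⟨ha, hb⟩ | ⟨ha, hb⟩) <;> exact ⟨by omega, hb⟩
      rw [h2, Finset.card_union_of_disjoint]
      · congr 1
        by_cases hs : sel (f ⟨k, hk⟩) = true
        · have he : (Finset.univ.filter (fun t : Fin n => t = ⟨k, hk⟩ ∧ sel (f t) = true))
              = {⟨k, hk⟩} := by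
            ext t
            simp only [Finset.mem_filter, Finset.mem_univ, true_and, Finset.mem_singleton]
            constructor
            · rintro ⟨h, _⟩; exact h
            · rintro rfl; exact ⟨rfl, hs⟩
          simp [he, hs]
        · have he : (Finset.univ.filter (fun t : Fin n => t = ⟨k, hk⟩ ∧ sel (f t) = true))
              = ∅ := by
            ext t
            simp only [Finset.mem_filter, Finset.mem_univ, true_and, Finset.notMem_empty,
              iff_false]
            rintro ⟨rfl, h⟩; exact hs h
          simp [he, hs]
      · rw [Finset.disjoint_left]
        intro t ht1 ht2
        simp only [Finset.mem_filter] at ht1 ht2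
        have : (t : ℕ) = k := by rw [ht2.2.1]
        omega
    · have hn' : n ≤ k := Nat.le_of_not_lt hk
      have hL : (List.ofFn f).length ≤ k := by simp [hn']
      rw [List.take_of_length_le (le_trans hL (Nat.le_succ k)), ← List.take_of_length_le hL]
      rw [ih]
      congr 1
      apply Finset.filter_congr
      intro t _
      have := t.isLt
      constructor <;> (rintro ⟨ha, hb⟩; exact ⟨by omega, hb⟩)

lemma stopCount_ofFn (sel : Fin n → Bool) (m : ℕ) (f : Fin n → Fin n) :
    stopCount sel m (List.ofFn f)
      = sInf {k | m ≤ (Finset.univ.filter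
          (fun t : Fin n => (t : ℕ) < k ∧ sel (f t) = true)).card} := by
  unfold stopCount
  congr 1
  ext k
  simp only [Set.mem_setOf_eq, length_filter_take_ofFn]

lemma stopCount_congr (sel sel' : Fin n → Bool) (m : ℕ) (f f' : Fin n → Fin n)
    (h : ∀ t, sel (f t) = sel' (f' t)) :
    stopCount sel m (List.ofFn f) = stopCount sel' m (List.ofFn f') := by
  rw [stopCount_ofFn, stopCount_ofFn]
  congr 2
  ext k
  constructor <;> (intro hk; convert hk using 3; rw [h])

lemma sum_split (l₁ l₂ : Fin n) (hne : l₁ ≠ l₂) (h : Fin n → ℕ) :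
    ∑ t, h t = h l₁ + h l₂ + ∑ t ∈ (Finset.univ.erase l₁).erase l₂, h t := by
  have hmem2 : l₂ ∈ Finset.univ.erase l₁ := by simp [Ne.symm hne]
  rw [← Finset.add_sum_erase _ h (Finset.mem_univ l₁), ← Finset.add_sum_erase _ h hmem2,
    add_assoc]

lemma stop_mono (m : ℕ) (g g' : Fin n → Bool) (l₁ l₂ : Fin n)
    (hlt : (l₁ : ℕ) < (l₂ : ℕ))
    (hg1 : g l₁ = true) (hg2' : g' l₂ = true) (hg1' : g' l₁ = false)
    (hagree : ∀ t, t ≠ l₁ → t ≠ l₂ → g t = g' t)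
    (htot : m ≤ N1 g') (f : Fin n → Fin n) (hf : ∀ t, t = f t) :
    stopCount g m (List.ofFn f) ≤ stopCount g' m (List.ofFn f) := by
  have hfg : ∀ (s : Fin n → Bool) k, (fun t : Fin n => (t:ℕ) < k ∧ s (f t) = true)
      = (fun t : Fin n => (t:ℕ) < k ∧ s t = true) := by
    intro s k; funext t; rw [← hf t]
  have hne : l₁ ≠ l₂ := fun h => by rw [h] at hlt; omega
  rw [stopCount_ofFn, stopCount_ofFn]
  simp only [hfg]
  set c : ℕ → ℕ := fun k =>
    (Finset.univ.filter (fun t : Fin n => (t:ℕ) < k ∧ g t = true)).card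
  set c' : ℕ → ℕ := fun k =>
    (Finset.univ.filter (fun t : Fin n => (t:ℕ) < k ∧ g' t = true)).card
  have hcc : ∀ k, c' k ≤ c k := by
    intro k
    show (Finset.univ.filter _).card ≤ (Finset.univ.filter _).card
    rw [Finset.card_filter, Finset.card_filter]
    rw [sum_split l₁ l₂ hne, sum_split l₁ l₂ hne]
    have hrest : ∑ t ∈ (Finset.univ.erase l₁).erase l₂,
        (if (t:ℕ) < k ∧ g' t = true then 1 else 0)
        = ∑ t ∈ (Finset.univ.erase l₁).erase l₂,
        (if (t:ℕ) < k ∧ g t = true then 1 else 0) := by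
      apply Finset.sum_congr rfl
      intro t ht
      simp only [Finset.mem_erase] at ht
      rw [hagree t ht.2.1 ht.1]
    rw [hrest]
    have hhead : (if (l₁:ℕ) < k ∧ g' l₁ = true then 1 else 0)
        + (if (l₂:ℕ) < k ∧ g' l₂ = true then 1 else 0)
        ≤ (if (l₁:ℕ) < k ∧ g l₁ = true then 1 else 0)
        + (if (l₂:ℕ) < k ∧ g l₂ = true then 1 else 0) := by
      rw [hg1, hg1', hg2']
      simp only [Bool.false_eq_true, and_false, if_false, and_true]
      by_cases h2 : (l₂:ℕ) < k
      · have h1 : (l₁:ℕ) < k := lt_trans hlt h2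
        simp [h1, h2]
      · simp [h2]
    omega
  have hSne : {k | m ≤ c' k}.Nonempty := by
    refine ⟨n, ?_⟩
    show m ≤ (Finset.univ.filter _).card
    have heq : (Finset.univ.filter (fun t : Fin n => (t:ℕ) < n ∧ g' t = true))
        = (Finset.univ.filter (fun t : Fin n => g' t = true)) := by
      apply Finset.filter_congr
      intro t _
      simp [t.isLt]
    rw [heq]
    exact htot
  have hmem := Nat.sInf_mem hSne
  exact Nat.sInf_le (le_trans hmem (hcc _))

end aux

theorem stmt2 {n : ℕ} (hn : 1 ≤ n) (p : Fin n → ℝ)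
    (hp : ∀ i, 0 < p i ∧ p i < 1)
    (B : ℕ) (hB : 2 ≤ B) (α : ℕ → ℕ)
    (hα1 : α 1 = 0) (hαtop : α (B + 1) = n + 1)
    (hmono : ∀ j, 1 ≤ j → j ≤ B → α j < α (j + 1))
    (j : ℕ) (hj1 : 1 ≤ j) (hjB : j ≤ B)
    (π : Equiv.Perm (Fin n)) (l : Fin n) (hl : (l : ℕ) + 1 < n)
    (hpl : p (π l) < p (π ⟨(l : ℕ) + 1, hl⟩))
    (π' : Equiv.Perm (Fin n))
    (hπ' : π' = π * Equiv.swap l ⟨(l : ℕ) + 1, hl⟩) :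
    C1 p (α j) (α (j + 1)) π' ≤ C1 p (α j) (α (j + 1)) π ∧
    ∃ S : ℝ, 0 ≤ S ∧
      C1 p (α j) (α (j + 1)) π - C1 p (α j) (α (j + 1)) π' =
        (p (π ⟨(l : ℕ) + 1, hl⟩) - p (π l)) * S := by
  classical
  set l₂ : Fin n := ⟨(l : ℕ) + 1, hl⟩ with hl₂
  set m : ℕ := α j
  set β : ℕ := α (j + 1)
  set x₁ : Fin n := π l with hx₁
  set x₂ : Fin n := π l₂ with hx₂
  have hll₂ : l ≠ l₂ := by
    intro h
    have : (l : ℕ) = (l₂ : ℕ) := congrArg _ h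
    simp [hl₂] at this
  have hx : x₁ ≠ x₂ := fun h => hll₂ (π.injective h)
  set sw : Equiv.Perm (Fin n) := Equiv.swap x₁ x₂ with hsw
  set e : (Fin n → Bool) → (Fin n → Bool) := fun a i => a (sw i) with he
  have hee : ∀ a, e (e a) = a := by
    intro a; funext i
    show a (sw (sw i)) = a i
    rw [hsw, Equiv.swap_apply_self]
  have hN1e : ∀ a, N1 (e a) = N1 a := fun a => N1_comp sw a
  set block : Finset (Fin n → Bool) :=
    Finset.univ.filter (fun a : Fin n → Bool => m ≤ N1 a ∧ N1 a < β) with hblock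
  -- reindexing lemma
  have hreidx : ∀ F : (Fin n → Bool) → ℝ, ∑ a ∈ block, F a = ∑ a ∈ block, F (e a) := by
    intro F
    apply Finset.sum_bij' (fun a _ => e a) (fun a _ => e a)
    · intro a ha
      simp only [hblock, Finset.mem_filter, Finset.mem_univ, true_and] at ha ⊢
      rw [hN1e]; exact ha
    · intro a ha
      simp only [hblock, Finset.mem_filter, Finset.mem_univ, true_and] at ha ⊢
      rw [hN1e]; exact ha
    · intro a _; exact hee a
    · intro a _; exact hee a
    · intro a _; rw [hee a]
  -- key pointwise identity relating π' and π
  have hptwise : ∀ (b : Fin n → Bool) (t : Fin n), (e b) (π' t) = b (π t) := by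
    intro b t
    have h1 : π' t = π (Equiv.swap l l₂ t) := by rw [hπ']; rfl
    have h2 : sw (π (Equiv.swap l l₂ t)) = π (Equiv.swap l l₂ (Equiv.swap l l₂ t)) := by
      rw [hsw, hx₁, hx₂, Equiv.swap_apply_apply]
      simp
    simp only [he, h1, h2, Equiv.swap_apply_self]
  -- product factorization
  set R : (Fin n → Bool) → ℝ :=
    fun b => ∏ i ∈ (Finset.univ.erase x₁).erase x₂, (if b i then p i else 1 - p i) with hR
  have hx₂mem : x₂ ∈ Finset.univ.erase x₁ := by simp [Ne.symm hx]
  have hfac : ∀ b : Fin n → Bool, pr p b =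
      (if b x₁ then p x₁ else 1 - p x₁) * ((if b x₂ then p x₂ else 1 - p x₂) * R b) := by
    intro b
    rw [pr, ← Finset.mul_prod_erase _ _ (Finset.mem_univ x₁), ← Finset.mul_prod_erase _ _ hx₂mem]
  have hRpos : ∀ b, 0 < R b := by
    intro b
    apply Finset.prod_pos
    intro i _
    by_cases hb : b i <;> simp [hb] <;> [skip; skip] <;> cases (hp i) <;> linarith
  have hRe : ∀ b, R (e b) = R b := by
    intro b
    apply Finset.prod_congr rfl
    intro i hi
    simp only [Finset.mem_erase] at hi
    have : sw i = i := Equiv.swap_apply_of_ne_of_ne hi.2.1 hi.1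
    simp [he, this]
  have hebx₁ : ∀ b : Fin n → Bool, (e b) x₁ = b x₂ := by
    intro b; simp [he, hsw, Equiv.swap_apply_left]
  have hebx₂ : ∀ b : Fin n → Bool, (e b) x₂ = b x₁ := by
    intro b; simp [he, hsw, Equiv.swap_apply_right]
  have hprdiff : ∀ b : Fin n → Bool, b x₁ = true → b x₂ = false →
      pr p b - pr p (e b) = (p x₁ - p x₂) * R b := by
    intro b h1 h2
    rw [hfac b, hfac (e b), hebx₁ b, hebx₂ b, h1, h2, hRe]
    simp only [if_true, Bool.false_eq_true, if_false]
    ring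
  -- C1 of π' rewritten over π
  set Lπ : List (Fin n) := List.ofFn (fun t => π t) with hLπ
  have hstop' : ∀ b : Fin n → Bool,
      stopCount (e b) m (List.ofFn (fun t => π' t)) = stopCount b m Lπ := by
    intro b
    exact stopCount_congr (e b) b m (fun t => π' t) (fun t => π t) (fun t => hptwise b t)
  have hC1' : C1 p m β π' = ∑ b ∈ block, (stopCount b m Lπ : ℝ) * pr p (e b) := by
    rw [C1]
    rw [hreidx (fun a => (stopCount a m (List.ofFn (fun t => π' t)) : ℝ) * pr p a)]
    apply Finset.sum_congr rfl
    intro b _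
    rw [hstop' b]
  have hdiff : C1 p m β π - C1 p m β π'
      = ∑ b ∈ block, (stopCount b m Lπ : ℝ) * (pr p b - pr p (e b)) := by
    rw [hC1', C1, ← Finset.sum_sub_distrib]
    apply Finset.sum_congr rfl
    intro b _
    rw [mul_sub]
  set g : (Fin n → Bool) → ℝ :=
    fun b => (stopCount b m Lπ : ℝ) * (pr p b - pr p (e b)) with hg
  -- stopping comparison
  have hstople : ∀ b : Fin n → Bool, m ≤ N1 b → b x₁ = true → b x₂ = false →
      stopCount b m Lπ ≤ stopCount (e b) m Lπ := by
    intro b hmb h1 h2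
    have e1 : stopCount b m Lπ = stopCount (fun t => b (π t)) m (List.ofFn (fun t => t)) :=
      stopCount_congr b (fun t => b (π t)) m (fun t => π t) (fun t => t) (fun t => rfl)
    have e2 : stopCount (e b) m Lπ
        = stopCount (fun t => (e b) (π t)) m (List.ofFn (fun t => t)) :=
      stopCount_congr (e b) (fun t => (e b) (π t)) m (fun t => π t) (fun t => t) (fun t => rfl)
    rw [e1, e2]
    apply stop_mono m _ _ l l₂
    · simp [hl₂]
    · rw [← hx₁]; exact h1
    · show (e b) (π l₂) = true
      rw [← hx₂, hebx₂, h1]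
    · show (e b) (π l) = false
      rw [← hx₁, hebx₁, h2]
    · intro t ht1 ht2
      have hπ1 : π t ≠ x₁ := fun h => ht1 (π.injective h)
      have hπ2 : π t ≠ x₂ := fun h => ht2 (π.injective h)
      show b (π t) = (e b) (π t)
      simp [he, hsw, Equiv.swap_apply_of_ne_of_ne hπ1 hπ2]
    · have : N1 (fun t => (e b) (π t)) = N1 (e b) := N1_comp π (e b)
      rw [this, hN1e]
      exact hmb
    · intro t; rfl
  -- each paired term is nonnegative
  have hcase : ∀ b : Fin n → Bool, m ≤ N1 b → b x₁ = true → b x₂ = false →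
      0 ≤ g b + g (e b) := by
    intro b hmb h1 h2
    have heq : g b + g (e b)
        = ((stopCount b m Lπ : ℝ) - (stopCount (e b) m Lπ : ℝ)) * (pr p b - pr p (e b)) := by
      rw [hg]
      simp only [hee b]
      ring
    rw [heq, hprdiff b h1 h2]
    have ha : ((stopCount b m Lπ : ℝ) - (stopCount (e b) m Lπ : ℝ)) ≤ 0 := by
      have := hstople b hmb h1 h2
      simp only [sub_nonpos, Nat.cast_le]
      exact this
    have hb2 : (p x₁ - p x₂) * R b ≤ 0 := by
      apply mul_nonpos_of_nonpos_of_nonneg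
      · linarith [hpl]
      · exact le_of_lt (hRpos b)
    nlinarith
  have hkey : ∀ b ∈ block, 0 ≤ g b + g (e b) := by
    intro b hb
    have hmb : m ≤ N1 b := by
      simp only [hblock, Finset.mem_filter] at hb
      exact hb.2.1
    by_cases h1 : b x₁ = true
    · by_cases h2 : b x₂ = true
      · have hebeq : e b = b := by
          funext i
          by_cases hi1 : i = x₁
          · rw [hi1, hebx₁, h1, h2]
          · by_cases hi2 : i = x₂
            · rw [hi2, hebx₂, h1, h2]
            · simp [he, hsw, Equiv.swap_apply_of_ne_of_ne hi1 hi2]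
        simp [hg, hebeq]
      · exact hcase b hmb h1 (Bool.not_eq_true _ ▸ (by simpa using h2))
    · by_cases h2 : b x₂ = true
      · have h1' : b x₁ = false := by simpa using h1
        have := hcase (e b) (by rw [hN1e]; exact hmb) (by rw [hebx₁]; exact h2)
          (by rw [hebx₂]; exact h1')
        rw [hee b] at this
        linarith
      · have hebeq : e b = b := by
          funext i
          have h1' : b x₁ = false := by simpa using h1
          have h2' : b x₂ = false := by simpa using h2
          by_cases hi1 : i = x₁
          · rw [hi1, hebx₁, h1', h2']
          · by_cases hi2 : i = x₂
            · rw [hi2, hebx₂, h1', h2']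
            · simp [he, hsw, Equiv.swap_apply_of_ne_of_ne hi1 hi2]
        simp [hg, hebeq]
  have hsum : 0 ≤ ∑ b ∈ block, g b := by
    have h2sum : (2 : ℝ) * ∑ b ∈ block, g b = ∑ b ∈ block, (g b + g (e b)) := by
      rw [Finset.sum_add_distrib, ← hreidx g]
      ring
    have : 0 ≤ ∑ b ∈ block, (g b + g (e b)) := Finset.sum_nonneg hkey
    linarith
  have hmain : 0 ≤ C1 p m β π - C1 p m β π' := by
    rw [hdiff]; exact hsum
  have hpne : p (π l₂) - p (π l) ≠ 0 := by
    have := hpl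
    rw [← hx₁, ← hx₂]
    linarith
  refine ⟨by linarith, (C1 p m β π - C1 p m β π') / (p (π l₂) - p (π l)), ?_, ?_⟩
  · apply div_nonneg hmain
    have := hpl
    rw [← hx₁, ← hx₂]
    linarith
  · rw [mul_comm, div_mul_cancel₀ _ hpne]
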